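/- Every s_ℝ-space X has countable ℝ-tightness; that is, for every discontinuous function f : X → ℝ there exists a countable subset A ⊆ X such that the restriction f↾A cannot be extended to a continuous real-valued function on all of X. -/
import Mathlib


open Set Filter Topology

universe u

/-- A function `f : X → ℝ` is sequentially continuous if `f (x n) → f x` whenever a
sequence `(x n)` converges to `x` in `X`. -/
def SeqCont {X : Type*} [TopologicalSpace X] (f : X → ℝ) : Prop :=
  ∀ (u : ℕ → X) (x : X), Tendsto u atTop (nhds x) →
    Tendsto (fun n => f (u n)) atTop (nhds (f x))

/-- A topological space `X` is an `s_ℝ`-space if every sequentially continuous real-valued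
function on `X` is continuous. -/
def IsSRSpace (X : Type*) [TopologicalSpace X] : Prop :=
  ∀ f : X → ℝ, SeqCont f → Continuous f

/-- Every `s_ℝ`-space has countable `ℝ`-tightness: every discontinuous real-valued
function has a restriction to some countable set that admits no continuous extension. -/
theorem sR_countable_R_tightness
    (X : Type*) [TopologicalSpace X] (hX : IsSRSpace X)
    (f : X → ℝ) (hf : ¬ Continuous f) :
    ∃ A : Set X, A.Countable ∧ ¬ ∃ g : X → ℝ, Continuous g ∧ ∀ x ∈ A, g x = f x := by
  have hsc : ¬ SeqCont f := fun h => hf (hX f h)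
  simp only [SeqCont, not_forall] at hsc
  obtain ⟨u, x, hu, hnt⟩ := hsc
  refine ⟨insert x (Set.range u), (Set.countable_range u).insert x, ?_⟩
  rintro ⟨g, hg, hgf⟩
  apply hnt
  have hx : g x = f x := hgf x (Set.mem_insert _ _)
  have hun : ∀ n, g (u n) = f (u n) := fun n =>
    hgf (u n) (Set.mem_insert_of_mem _ ⟨n, rfl⟩)
  have := (hg.tendsto x).comp hu
  rw [hx] at this
  exact this.congr fun n => hun n
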